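/- arXiv:1111.1411 — 3 statements merged into one kernel-verified Lean document; each statement's English description precedes it below -/
import Mathlib

section
/- For integers n ≥ 1 and r ≥ 1, the Stirling-type sum S(n+r, r) := (1/r!) Σ_{j=0}^{r} (-1)^j binomial(r,j) (r-j)^{n+r} satisfies the identity S(n+r,r) · r! = (n+r)! · Σ_{(k_1,...,k_r) ∈ K_{n,r}} ∏_{i=1}^r 1/(k_i+1)!, where K_{n,r} is the set of r-tuples of nonnegative integers summing to n. -/
open PowerSeries Finset

noncomputable def psi : ℚ⟦X⟧ := PowerSeries.mk fun k => (1 : ℚ) / Nat.factorial (k + 1)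

lemma exp_sub_one_eq : PowerSeries.exp ℚ - 1 = X * psi := by
  ext m
  cases m with
  | zero => simp [psi]
  | succ m =>
    simp [psi, PowerSeries.coeff_succ_X_mul, PowerSeries.coeff_exp,
      PowerSeries.coeff_one, Nat.succ_ne_zero]

lemma rhs_eq (n r : ℕ) :
    PowerSeries.coeff (R := ℚ) (n + r) ((PowerSeries.exp ℚ - 1) ^ r)
      = ∑ k ∈ Finset.Nat.antidiagonalTuple r n, ∏ i, (1 : ℚ) / Nat.factorial (k i + 1) := by
  rw [exp_sub_one_eq, mul_pow, PowerSeries.coeff_X_pow_mul, PowerSeries.coeff_pow]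
  refine Finset.sum_nbij' (fun l => fun i : Fin r => l i)
    (fun k => Finsupp.onFinset (Finset.range r)
      (fun j => if h : j < r then k ⟨j, h⟩ else 0) (fun j hj => by
        simp only [Finset.mem_range]; by_contra h; simp [h] at hj)) ?_ ?_ ?_ ?_ ?_
  · intro l hl
    simp only [Finset.mem_finsuppAntidiag] at hl
    rw [Finset.Nat.mem_antidiagonalTuple, ← hl.1]
    rw [Finset.sum_range fun i => l i]
  · intro k hk
    rw [Finset.Nat.mem_antidiagonalTuple] at hk
    simp only [Finset.mem_finsuppAntidiag]
    constructor
    · rw [← hk, Finset.sum_range]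
      apply Finset.sum_congr rfl
      intro i _
      simp [Finsupp.onFinset_apply, i.isLt]
    · exact Finsupp.support_onFinset_subset
  · intro l hl
    simp only [Finset.mem_finsuppAntidiag] at hl
    ext j
    simp only [Finsupp.onFinset_apply]
    by_cases h : j < r
    · simp [h]
    · simp only [h, dif_neg, not_false_iff]
      by_contra h0
      have := hl.2 (Finsupp.mem_support_iff.2 (Ne.symm h0))
      simp [Finset.mem_range, h] at this
  · intro k hk
    ext i
    simp [Finsupp.onFinset_apply, i.isLt]
  · intro l hl
    simp only [Finset.mem_finsuppAntidiag] at hl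
    rw [Finset.prod_range fun i => PowerSeries.coeff (R := ℚ) (l i) psi]
    apply Finset.prod_congr rfl
    intro i _
    simp [psi]

lemma lhs_eq (n r : ℕ) :
    ∑ j ∈ Finset.range (r + 1), (-1 : ℚ) ^ j * Nat.choose r j * ((r - j : ℕ) : ℚ) ^ (n + r)
      = (Nat.factorial (n + r) : ℚ) * PowerSeries.coeff (R := ℚ) (n + r) ((PowerSeries.exp ℚ - 1) ^ r) := by
  rw [sub_pow, map_sum, Finset.mul_sum, ← Finset.sum_range_reflect]
  apply Finset.sum_congr rfl
  intro j hj
  rw [Finset.mem_range] at hj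
  have hj' : j ≤ r := by omega
  simp only [add_tsub_cancel_right, Nat.sub_sub_self hj', Nat.choose_symm hj']
  have h1 : (-1 : ℚ⟦X⟧) ^ (j + r) = PowerSeries.C (R := ℚ) ((-1 : ℚ) ^ (j + r)) := by simp
  have h2 : ((Nat.choose r j : ℕ) : ℚ⟦X⟧) = PowerSeries.C (R := ℚ) (Nat.choose r j) := by simp
  rw [one_pow, mul_one, h1, h2, exp_pow_eq_rescale_exp]
  have h5 : PowerSeries.C (R := ℚ) ((-1 : ℚ) ^ (j + r)) * (rescale (j : ℚ)) (PowerSeries.exp ℚ)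
      * PowerSeries.C (R := ℚ) ((Nat.choose r j : ℕ) : ℚ)
      = PowerSeries.C (R := ℚ) ((-1 : ℚ) ^ (j + r) * ((Nat.choose r j : ℕ) : ℚ))
        * (rescale (j : ℚ)) (PowerSeries.exp ℚ) := by
    rw [map_mul]; ring
  rw [h5, PowerSeries.coeff_C_mul, PowerSeries.coeff_rescale, PowerSeries.coeff_exp]
  have h3 : (-1 : ℚ) ^ (j + r) = (-1 : ℚ) ^ (r - j) := by
    rw [neg_one_pow_eq_pow_mod_two, neg_one_pow_eq_pow_mod_two (n := r - j)]
    congr 1; omega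
  have h4 : (Nat.factorial (n + r) : ℚ) ≠ 0 := Nat.cast_ne_zero.2 (Nat.factorial_ne_zero _)
  rw [h3]
  simp only [Algebra.algebraMap_self, RingHom.id_apply]
  field_simp

theorem stirling_sum_identity (n r : ℕ) (hn : 1 ≤ n) (hr : 1 ≤ r) :
    ((1 : ℚ) / Nat.factorial r *
        ∑ j ∈ Finset.range (r + 1),
          (-1) ^ j * Nat.choose r j * ((r - j : ℕ) : ℚ) ^ (n + r)) * Nat.factorial r
      = Nat.factorial (n + r) *
        ∑ k ∈ Finset.Nat.antidiagonalTuple r n, ∏ i, (1 : ℚ) / Nat.factorial (k i + 1) := by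
  have hr0 : (Nat.factorial r : ℚ) ≠ 0 := Nat.cast_ne_zero.2 (Nat.factorial_ne_zero _)
  rw [← rhs_eq n r, ← lhs_eq n r]
  field_simp
end

section
/- Geometric genus formula for homogeneous complete intersections as a binomial identity: for positive integers p_1,...,p_r and N = n + r, the alternating sum Σ_{S ⊆ {1,...,r}} (-1)^{|S|} binomial((Σ_k p_k) - Σ_{i∈S} p_i, N) equals Σ_{(k_1,...,k_r) ∈ K_{n,r}} ∏_{i=1}^r binomial(p_i, k_i + 1). -/
open Finset PowerSeries

private lemma coeff_one_add_X_pow' (q m : ℕ) :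
    (PowerSeries.coeff (R := ℤ) m) ((1 + PowerSeries.X) ^ q) = (q.choose m : ℤ) := by
  have h : (((1 + Polynomial.X : Polynomial ℤ) ^ q : Polynomial ℤ) : PowerSeries ℤ)
      = (1 + PowerSeries.X) ^ q := by
    rw [Polynomial.coe_pow, Polynomial.coe_add, Polynomial.coe_one, Polynomial.coe_X]
  rw [← h, Polynomial.coeff_coe, Polynomial.coeff_one_add_X_pow]

theorem genus_binomial_identity (n r : ℕ) (hr : 1 ≤ r) (p : Fin r → ℕ)
    (hp : ∀ i, 1 ≤ p i) :
    (∑ S : Finset (Fin r),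
        (-1 : ℤ) ^ S.card * Nat.choose ((∑ i, p i) - ∑ i ∈ S, p i) (n + r))
      = ∑ k ∈ Finset.Nat.antidiagonalTuple r n, ∏ i, (Nat.choose (p i) (k i + 1) : ℤ) := by
  classical
  set N := n + r with hN
  set F : PowerSeries ℤ := ∏ i : Fin r, ((1 + PowerSeries.X) ^ (p i) - 1) with hF
  -- LHS computation
  have hL : (PowerSeries.coeff (R := ℤ) N) F
      = ∑ S : Finset (Fin r),
        (-1 : ℤ) ^ S.card * Nat.choose ((∑ i, p i) - ∑ i ∈ S, p i) N := by
    have expand : F = ∑ t : Finset (Fin r),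
        (-1 : ℤ) ^ (univ \ t).card • (1 + PowerSeries.X) ^ (∑ i ∈ t, p i) := by
      rw [hF]
      simp only [sub_eq_add_neg]
      rw [Finset.prod_add, Finset.powerset_univ]
      refine Finset.sum_congr rfl fun t _ => ?_
      rw [Finset.prod_pow_eq_pow_sum, Finset.prod_const]
      rw [zsmul_eq_mul, mul_comm]
      norm_num
    rw [expand, map_sum]
    rw [← Fintype.sum_equiv (Function.Involutive.toPerm _ (compl_involutive))
      _ (fun S => (-1 : ℤ) ^ S.card * Nat.choose ((∑ i, p i) - ∑ i ∈ S, p i) N)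
      (fun t => ?_)]
    rw [map_zsmul, coeff_one_add_X_pow', zsmul_eq_mul]
    have h1 : (Function.Involutive.toPerm _ (compl_involutive) t : Finset (Fin r)) = tᶜ := rfl
    rw [h1]
    have h2 : (∑ i, p i) - ∑ i ∈ tᶜ, p i = ∑ i ∈ t, p i := by
      have := Finset.sum_compl_add_sum t p
      omega
    rw [h2, Finset.compl_eq_univ_sdiff]
    push_cast
    ring
  -- RHS computation
  have hR : (PowerSeries.coeff (R := ℤ) N) F
      = ∑ k ∈ Finset.Nat.antidiagonalTuple r n, ∏ i, (Nat.choose (p i) (k i + 1) : ℤ) := by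
    rw [hF, PowerSeries.coeff_prod]
    have hc : ∀ (i : Fin r) (m : ℕ),
        (PowerSeries.coeff (R := ℤ) m) ((1 + PowerSeries.X) ^ (p i) - 1)
          = if m = 0 then 0 else ((p i).choose m : ℤ) := by
      intro i m
      rw [map_sub, coeff_one_add_X_pow', PowerSeries.coeff_one]
      split_ifs with h
      · subst h; simp
      · simp
    simp only [hc]
    rw [← Finset.sum_filter_of_ne (p := fun l : Fin r →₀ ℕ => ∀ i, l i ≠ 0)
      (fun l _ hl i => by
        intro h0
        apply hl
        exact Finset.prod_eq_zero (Finset.mem_univ i) (by rw [h0]; simp))]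
    refine Finset.sum_nbij' (fun l => fun j => l j - 1)
      (fun k => Finsupp.equivFunOnFinite.symm (fun j => k j + 1)) ?_ ?_ ?_ ?_ ?_
    · intro l hl
      simp only [Finset.mem_filter, Finset.mem_finsuppAntidiag] at hl
      obtain ⟨⟨hsum, -⟩, hpos⟩ := hl
      rw [Finset.Nat.mem_antidiagonalTuple]
      have h1 : ∑ j, (l j - 1 + 1) = ∑ j, l j :=
        Finset.sum_congr rfl fun j _ => Nat.succ_pred_eq_of_pos (Nat.pos_of_ne_zero (hpos j))
      rw [Finset.sum_add_distrib, Finset.sum_const, Finset.card_univ, Fintype.card_fin,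
        smul_eq_mul, mul_one, hsum] at h1
      omega
    · intro k hk
      rw [Finset.Nat.mem_antidiagonalTuple] at hk
      simp only [Finset.mem_filter, Finset.mem_finsuppAntidiag]
      refine ⟨⟨?_, Finset.subset_univ _⟩, fun i => by simp⟩
      simp only [Finsupp.coe_equivFunOnFinite_symm]
      rw [Finset.sum_add_distrib, hk, Finset.sum_const, Finset.card_univ, Fintype.card_fin,
        smul_eq_mul, mul_one]
    · intro l hl
      simp only [Finset.mem_filter] at hl
      ext j
      simp only [Finsupp.coe_equivFunOnFinite_symm]
      exact Nat.succ_pred_eq_of_pos (Nat.pos_of_ne_zero (hl.2 j))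
    · intro k _
      funext j
      simp
    · intro l hl
      simp only [Finset.mem_filter] at hl
      refine Finset.prod_congr rfl fun i _ => ?_
      dsimp only
      have h3 : l i - 1 + 1 = l i := Nat.succ_pred_eq_of_pos (Nat.pos_of_ne_zero (hl.2 i))
      rw [if_neg (hl.2 i), h3]
  rw [← hL, hR]
end

section
/- Equal-degree asymptotics: for fixed integers n ≥ 1 and r ≥ 1, with μ(p) = (-1)^n (p^r Σ_{j=0}^n (1-p)^j binomial(j+r-1, j) - 1) and p_g(p) = Σ_{k ∈ K_{n,r}} ∏_{i=1}^r binomial(p, k_i+1), the ratio μ(p)/p_g(p) tends to C_{n,r} = |K_{n,r}| / (Σ_{k ∈ K_{n,r}} ∏_i 1/(k_i+1)!) as p → ∞. -/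
open Filter Finset

/-- `C n r = |K_{n,r}| / Σ_{k ∈ K_{n,r}} ∏ 1/(k_i+1)!`. -/
noncomputable def Cnr (n r : ℕ) : ℝ :=
  ((Finset.Nat.antidiagonalTuple r n).card : ℝ) /
    ∑ k ∈ Finset.Nat.antidiagonalTuple r n, ∏ i, (1 : ℝ) / Nat.factorial (k i + 1)

/-- Milnor number of the homogeneous ICIS of multidegree `(p,…,p)`. -/
noncomputable def muEq (n r p : ℕ) : ℝ :=
  (-1) ^ n * ((p : ℝ) ^ r *
    (∑ j ∈ Finset.range (n + 1), (1 - (p : ℝ)) ^ j * Nat.choose (j + r - 1) j) - 1)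

/-- Geometric genus of the homogeneous ICIS of multidegree `(p,…,p)`. -/
noncomputable def pgEq (n r p : ℕ) : ℝ :=
  ∑ k ∈ Finset.Nat.antidiagonalTuple r n, ∏ i, (Nat.choose p (k i + 1) : ℝ)

lemma tendsto_inv_nat : Tendsto (fun p : ℕ => ((p : ℝ))⁻¹) atTop (nhds 0) :=
  tendsto_inv_atTop_zero.comp tendsto_natCast_atTop_atTop

lemma choose_div_tendsto (m : ℕ) :
    Tendsto (fun p : ℕ => (p.choose m : ℝ) / (p : ℝ) ^ m) atTop
      (nhds (1 / m.factorial)) := by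
  have hc : Continuous (fun x : ℝ => (∏ i ∈ range m, (1 - i * x)) / m.factorial) := by
    apply Continuous.div_const
    exact continuous_finset_prod _ fun i _ => by continuity
  have h0 : (fun x : ℝ => (∏ i ∈ range m, (1 - i * x)) / m.factorial) 0
      = 1 / m.factorial := by simp
  have hlim : Tendsto ((fun x : ℝ => (∏ i ∈ range m, (1 - i * x)) / m.factorial) ∘
      fun p : ℕ => ((p : ℝ))⁻¹) atTop (nhds (1 / m.factorial)) := by
    simpa using (hc.tendsto 0).comp tendsto_inv_nat
  refine hlim.congr' ?_
  filter_upwards [eventually_ge_atTop m, eventually_ge_atTop 1] with p hpm hp1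
  have hp0 : (p : ℝ) ≠ 0 := by positivity
  have hfac : (m.factorial : ℝ) ≠ 0 := by positivity
  have key : (p.choose m : ℝ) * m.factorial = ∏ i ∈ range m, ((p : ℝ) - i) := by
    have h1 := Nat.descFactorial_eq_factorial_mul_choose p m
    rw [Nat.descFactorial_eq_prod_range] at h1
    have h2 : ((∏ i ∈ range m, (p - i) : ℕ) : ℝ)
        = (m.factorial : ℝ) * (p.choose m : ℝ) := by exact_mod_cast congrArg Nat.cast h1
    rw [Nat.cast_prod] at h2
    rw [mul_comm, ← h2]
    refine Finset.prod_congr rfl fun i hi => ?_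
    have : i ≤ p := le_trans (le_of_lt (mem_range.mp hi)) hpm
    push_cast [Nat.cast_sub this]
    ring
  have hprod : (∏ i ∈ range m, (1 - (i : ℝ) * (p : ℝ)⁻¹))
      = (∏ i ∈ range m, ((p : ℝ) - i)) / (p : ℝ) ^ m := by
    have hterm : ∀ i ∈ range m, (1 - (i : ℝ) * (p : ℝ)⁻¹) = ((p : ℝ) - i) / p :=
      fun i _ => by field_simp
    rw [Finset.prod_congr rfl hterm, Finset.prod_div_distrib, Finset.prod_const, card_range]
  show (∏ i ∈ range m, (1 - (i : ℝ) * (p : ℝ)⁻¹)) / m.factorial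
      = (p.choose m : ℝ) / (p : ℝ) ^ m
  rw [hprod, ← key]
  field_simp

lemma pow_ratio_tendsto (n j : ℕ) (hj : j ≤ n) :
    Tendsto (fun p : ℕ => (1 - (p : ℝ)) ^ j / (p : ℝ) ^ n) atTop
      (nhds (if j = n then (-1 : ℝ) ^ n else 0)) := by
  have hc : Continuous (fun x : ℝ => (x - 1) ^ j * x ^ (n - j)) := by continuity
  have hval : (fun x : ℝ => (x - 1) ^ j * x ^ (n - j)) 0
      = (if j = n then (-1 : ℝ) ^ n else 0) := by
    rcases eq_or_lt_of_le hj with h | h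
    · simp [h, Nat.sub_self]
    · simp [Nat.sub_ne_zero_of_lt h, zero_pow, if_neg (ne_of_lt h)]
  have hlim : Tendsto ((fun x : ℝ => (x - 1) ^ j * x ^ (n - j)) ∘ fun p : ℕ => ((p : ℝ))⁻¹)
      atTop (nhds (if j = n then (-1 : ℝ) ^ n else 0)) := by
    rw [← hval]; exact ((hc.tendsto 0).comp tendsto_inv_nat)
  refine hlim.congr' ?_
  filter_upwards [eventually_ge_atTop 1] with p hp1
  have hp0 : (p : ℝ) ≠ 0 := by positivity
  show ((p : ℝ)⁻¹ - 1) ^ j * ((p : ℝ)⁻¹) ^ (n - j) = (1 - (p : ℝ)) ^ j / (p : ℝ) ^ n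
  have h1 : ((p : ℝ)⁻¹ - 1) = (1 - (p : ℝ)) * (p : ℝ)⁻¹ := by field_simp
  rw [h1, mul_pow, mul_assoc, ← pow_add, Nat.add_sub_cancel' hj, inv_pow, div_eq_mul_inv]

lemma mu_tendsto (n r : ℕ) (hn : 1 ≤ n) :
    Tendsto (fun p : ℕ => muEq n r p / (p : ℝ) ^ (n + r)) atTop
      (nhds (((n + r - 1).choose n : ℝ))) := by
  have hsum : Tendsto (fun p : ℕ => ∑ j ∈ range (n + 1),
      ((Nat.choose (j + r - 1) j : ℝ)) * ((1 - (p : ℝ)) ^ j / (p : ℝ) ^ n)) atTop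
      (nhds (∑ j ∈ range (n + 1),
        ((Nat.choose (j + r - 1) j : ℝ)) * (if j = n then (-1 : ℝ) ^ n else 0))) :=
    tendsto_finset_sum _ fun j hj =>
      tendsto_const_nhds.mul (pow_ratio_tendsto n j (Nat.lt_succ_iff.mp (mem_range.mp hj)))
  have hval : (∑ j ∈ range (n + 1),
      ((Nat.choose (j + r - 1) j : ℝ)) * (if j = n then (-1 : ℝ) ^ n else 0))
      = ((n + r - 1).choose n : ℝ) * (-1) ^ n := by
    simp only [mul_ite, mul_zero]
    rw [Finset.sum_ite_eq' (range (n + 1)) n]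
    simp
  have hinv : Tendsto (fun p : ℕ => ((p : ℝ)⁻¹) ^ (n + r)) atTop (nhds 0) := by
    have := tendsto_inv_nat.pow (n + r)
    simpa [zero_pow (by omega : n + r ≠ 0)] using this
  have hlim := (tendsto_const_nhds (x := (-1 : ℝ) ^ n)).mul (hsum.sub hinv)
  rw [hval] at hlim
  have hfin : (-1 : ℝ) ^ n * (((n + r - 1).choose n : ℝ) * (-1) ^ n - 0)
      = ((n + r - 1).choose n : ℝ) := by
    rw [sub_zero]
    have : (-1 : ℝ) ^ n * (-1 : ℝ) ^ n = 1 := by rw [← mul_pow]; norm_num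
    calc (-1 : ℝ) ^ n * (((n + r - 1).choose n : ℝ) * (-1) ^ n)
        = ((n + r - 1).choose n : ℝ) * ((-1 : ℝ) ^ n * (-1 : ℝ) ^ n) := by ring
      _ = _ := by rw [this, mul_one]
  rw [hfin] at hlim
  refine hlim.congr' ?_
  filter_upwards [eventually_ge_atTop 1] with p hp1
  have hp0 : (p : ℝ) ≠ 0 := by positivity
  show (-1 : ℝ) ^ n * ((∑ j ∈ range (n + 1),
      ((Nat.choose (j + r - 1) j : ℝ)) * ((1 - (p : ℝ)) ^ j / (p : ℝ) ^ n))
      - ((p : ℝ)⁻¹) ^ (n + r)) = muEq n r p / (p : ℝ) ^ (n + r)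
  have hS : (∑ j ∈ range (n + 1),
      ((Nat.choose (j + r - 1) j : ℝ)) * ((1 - (p : ℝ)) ^ j / (p : ℝ) ^ n))
      = (∑ j ∈ range (n + 1), (1 - (p : ℝ)) ^ j * (Nat.choose (j + r - 1) j : ℝ))
        / (p : ℝ) ^ n := by
    rw [Finset.sum_div]
    exact Finset.sum_congr rfl fun j _ => by ring
  rw [hS, muEq]
  have hpn : (p : ℝ) ^ n ≠ 0 := by positivity
  have hpnr : (p : ℝ) ^ (n + r) ≠ 0 := by positivity
  rw [inv_pow]
  field_simp
  ring

lemma card_adt (r n : ℕ) :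
    (Finset.Nat.antidiagonalTuple r n).card = (n + r - 1).choose n := by
  have key : ∀ (k : Fin r → ℕ) (i : Fin r),
      Multiset.count i (∑ j : Fin r, k j • ({j} : Multiset (Fin r))) = k i := by
    intro k i
    rw [Multiset.count_sum']
    simp [Multiset.count_nsmul, Multiset.count_singleton, Finset.sum_ite_eq]
  have h : (Finset.Nat.antidiagonalTuple r n).card
      = (Finset.univ : Finset (Sym (Fin r) n)).card := by
    apply Finset.card_bij (t := (Finset.univ : Finset (Sym (Fin r) n))) (fun k hk =>
      (⟨∑ i : Fin r, (k i) • ({i} : Multiset (Fin r)), by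
        rw [Multiset.card_sum]
        simp only [Multiset.card_nsmul, Multiset.card_singleton,
          smul_eq_mul, mul_one]
        exact Finset.Nat.mem_antidiagonalTuple.mp hk⟩ : Sym (Fin r) n))
    · intro k hk; exact Finset.mem_univ _
    · intro k₁ h₁ k₂ h₂ heq
      funext i
      have := congrArg (fun s : Sym (Fin r) n => Multiset.count i (s : Multiset (Fin r))) heq
      simpa [key] using this
    · intro s _
      refine ⟨fun i => Multiset.count i (s : Multiset (Fin r)), ?_, ?_⟩
      · rw [Finset.Nat.mem_antidiagonalTuple]
        have h1 : ∑ i : Fin r, Multiset.count i (s : Multiset (Fin r))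
            = Multiset.card (s : Multiset (Fin r)) := by
          rw [← Multiset.toFinset_sum_count_eq]
          refine (Finset.sum_subset (Finset.subset_univ _) fun i _ hi => ?_).symm
          exact Multiset.count_eq_zero_of_notMem (fun hm => hi (Multiset.mem_toFinset.mpr hm))
        rw [h1]; exact s.prop
      · apply Subtype.ext
        apply Multiset.ext.mpr
        intro i
        exact key _ i
  rw [h, Finset.card_univ, Sym.card_sym_eq_choose, Fintype.card_fin, Nat.add_comm]

lemma pg_tendsto (n r : ℕ) :
    Tendsto (fun p : ℕ => pgEq n r p / (p : ℝ) ^ (n + r)) atTop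
      (nhds (∑ k ∈ Finset.Nat.antidiagonalTuple r n,
        ∏ i, (1 : ℝ) / Nat.factorial (k i + 1))) := by
  have hlim : Tendsto (fun p : ℕ => ∑ k ∈ Finset.Nat.antidiagonalTuple r n,
      ∏ i, ((p.choose (k i + 1) : ℝ) / (p : ℝ) ^ (k i + 1))) atTop
      (nhds (∑ k ∈ Finset.Nat.antidiagonalTuple r n,
        ∏ i, (1 : ℝ) / Nat.factorial (k i + 1))) :=
    tendsto_finset_sum _ fun k hk =>
      tendsto_finset_prod _ fun i _ => choose_div_tendsto (k i + 1)
  refine hlim.congr' ?_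
  filter_upwards [eventually_ge_atTop 1] with p hp1
  have hp0 : (p : ℝ) ≠ 0 := by positivity
  show (∑ k ∈ Finset.Nat.antidiagonalTuple r n,
      ∏ i, ((p.choose (k i + 1) : ℝ) / (p : ℝ) ^ (k i + 1)))
      = pgEq n r p / (p : ℝ) ^ (n + r)
  rw [pgEq, Finset.sum_div]
  refine Finset.sum_congr rfl fun k hk => ?_
  rw [Finset.prod_div_distrib]
  congr 1
  rw [Finset.prod_pow_eq_pow_sum]
  congr 1
  have hsum := Finset.Nat.mem_antidiagonalTuple.mp hk
  rw [Finset.sum_add_distrib, hsum, Finset.sum_const, Finset.card_univ, Fintype.card_fin,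
    smul_eq_mul, mul_one]

theorem ratio_tendsto_C (n r : ℕ) (hn : 1 ≤ n) (hr : 1 ≤ r) :
    Filter.Tendsto (fun p : ℕ => muEq n r p / pgEq n r p) Filter.atTop
      (nhds (Cnr n r)) := by
  set S : ℝ := ∑ k ∈ Finset.Nat.antidiagonalTuple r n,
    ∏ i, (1 : ℝ) / Nat.factorial (k i + 1) with hSdef
  have hne : (Finset.Nat.antidiagonalTuple r n).Nonempty := by
    refine ⟨fun i => if i = (⟨0, hr⟩ : Fin r) then n else 0, ?_⟩
    rw [Finset.Nat.mem_antidiagonalTuple]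
    simp
  have hS : 0 < S :=
    Finset.sum_pos (fun k _ => Finset.prod_pos fun i _ => by positivity) hne
  have h1 := mu_tendsto n r hn
  have h2 := pg_tendsto n r
  have hdiv := h1.div h2 hS.ne'
  have hC : Cnr n r = ((n + r - 1).choose n : ℝ) / S := by
    rw [Cnr, card_adt]
  rw [hC]
  refine hdiv.congr' ?_
  filter_upwards [eventually_ge_atTop 1] with p hp1
  have hp0 : ((p : ℝ)) ^ (n + r) ≠ 0 := by positivity
  show muEq n r p / (p : ℝ) ^ (n + r) / (pgEq n r p / (p : ℝ) ^ (n + r))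
      = muEq n r p / pgEq n r p
  rcases eq_or_ne (pgEq n r p) 0 with h | h
  · simp [h]
  · field_simp
end
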